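/- For each fixed y > 0, the function T ↦ (1 + y/√T)^T · e^{-y√T} is monotonically decreasing in T for T ≥ 1. -/

import Mathlib

lemma logA_aux {x : ℝ} (hx : 0 ≤ x) :
    Real.log (1 + x) ≤ x / 2 + x / (2 * (1 + x)) := by
  set φ : ℝ → ℝ := fun x => x / 2 + x / (2 * (1 + x)) - Real.log (1 + x) with hφ
  have hd : ∀ t : ℝ, 0 < t →
      HasDerivAt φ (1 / 2 + (1 * (2 * (1 + t)) - t * 2) / (2 * (1 + t)) ^ 2 - 1 / (1 + t)) t := by
    intro t ht
    have h1t : (0:ℝ) < 1 + t := by linarith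
    have h1 : HasDerivAt (fun s : ℝ => s / 2) (1 / 2) t := by
      simpa using (hasDerivAt_id t).div_const 2
    have h2 : HasDerivAt (fun s : ℝ => 2 * (1 + s)) 2 t := by
      simpa using (((hasDerivAt_id t).const_add 1).const_mul 2)
    have h3 : HasDerivAt (fun s : ℝ => s / (2 * (1 + s)))
        ((1 * (2 * (1 + t)) - t * 2) / (2 * (1 + t)) ^ 2) t :=
      (hasDerivAt_id t).div h2 (by positivity)
    have h4 : HasDerivAt (fun s : ℝ => Real.log (1 + s)) (1 / (1 + t)) t := by
      simpa using (((hasDerivAt_id t).const_add 1).log h1t.ne')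
    exact (h1.add h3).sub h4
  have hmono : MonotoneOn φ (Set.Ici 0) := by
    apply monotoneOn_of_deriv_nonneg (convex_Ici 0)
    · intro t ht
      simp only [Set.mem_Ici] at ht
      have h1t : (0:ℝ) < 1 + t := by linarith
      have : ContinuousAt φ t := by
        rcases eq_or_lt_of_le ht with h | h
        · -- t = 0; still continuous: direct
          fun_prop (disch := intros; positivity)
        · exact (hd t h).continuousAt
      exact this.continuousWithinAt
    · intro t ht
      rw [interior_Ici] at ht
      exact (hd t ht).differentiableAt.differentiableWithinAt
    · intro t ht
      rw [interior_Ici] at ht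
      have ht' : (0:ℝ) < t := ht
      have h1t : (0:ℝ) < 1 + t := by linarith
      rw [(hd t ht).deriv]
      have heq : 1 / 2 + (1 * (2 * (1 + t)) - t * 2) / (2 * (1 + t)) ^ 2 - 1 / (1 + t)
          = t ^ 2 / (2 * (1 + t) ^ 2) := by
        field_simp
        ring
      rw [heq]
      positivity
  have h0 : φ 0 = 0 := by simp [hφ]
  have := hmono (Set.self_mem_Ici) hx hx
  rw [h0] at this
  simpa [hφ] using this

theorem stmt4 (y : ℝ) (hy : 0 < y) :
    AntitoneOn (fun T : ℝ => (1 + y / Real.sqrt T) ^ T * Real.exp (-(y * Real.sqrt T)))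
      (Set.Ici (1 : ℝ)) := by
  set g : ℝ → ℝ := fun T => T * Real.log (1 + y / Real.sqrt T) - y * Real.sqrt T with hg
  have hd : ∀ T : ℝ, 0 < T → HasDerivAt g
      (Real.log (1 + y / Real.sqrt T) - y / (2 * Real.sqrt T * (1 + y / Real.sqrt T))
        - y / (2 * Real.sqrt T)) T := by
    intro T hT
    have hs0 : 0 < Real.sqrt T := Real.sqrt_pos.mpr hT
    have hb : 0 < 1 + y / Real.sqrt T := by positivity
    have hsd : HasDerivAt Real.sqrt (1 / (2 * Real.sqrt T)) T := Real.hasDerivAt_sqrt hT.ne'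
    have h2 : HasDerivAt (fun t => y / Real.sqrt t)
        ((0 * Real.sqrt T - y * (1 / (2 * Real.sqrt T))) / (Real.sqrt T) ^ 2) T :=
      (hasDerivAt_const T y).div hsd hs0.ne'
    have h3 : HasDerivAt (fun t => 1 + y / Real.sqrt t)
        ((0 * Real.sqrt T - y * (1 / (2 * Real.sqrt T))) / (Real.sqrt T) ^ 2) T :=
      h2.const_add 1
    have h4 := h3.log hb.ne'
    have h5 := (hasDerivAt_id T).mul h4
    have h6 := hsd.const_mul y
    have h7 := h5.sub h6
    convert h7 using 1
    · rfl
    · rfl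
    · rfl
    have hsq : (Real.sqrt T) ^ 2 = T := Real.sq_sqrt hT.le
    rw [hsq]
    simp only [id]
    field_simp
    ring
  have hderiv_nonpos : ∀ T : ℝ, 0 < T →
      Real.log (1 + y / Real.sqrt T) - y / (2 * Real.sqrt T * (1 + y / Real.sqrt T))
        - y / (2 * Real.sqrt T) ≤ 0 := by
    intro T hT
    have hs0 : 0 < Real.sqrt T := Real.sqrt_pos.mpr hT
    set x := y / Real.sqrt T with hx
    have hx0 : 0 < x := by positivity
    have hlog := logA_aux hx0.le
    have e1 : y / (2 * Real.sqrt T) = x / 2 := by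
      rw [hx]; ring
    have e2 : y / (2 * Real.sqrt T * (1 + x)) = x / (2 * (1 + x)) := by
      have h1x : (0:ℝ) < 1 + x := by linarith
      rw [hx]
      field_simp
    rw [e1, e2]
    linarith
  have key : AntitoneOn g (Set.Ici 1) := by
    apply antitoneOn_of_deriv_nonpos (convex_Ici 1)
    · intro T hT
      have hT0 : (0:ℝ) < T := lt_of_lt_of_le one_pos hT
      exact (hd T hT0).continuousAt.continuousWithinAt
    · intro T hT
      rw [interior_Ici] at hT
      exact (hd T (lt_trans one_pos hT)).differentiableAt.differentiableWithinAt
    · intro T hT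
      rw [interior_Ici] at hT
      have hT0 : (0:ℝ) < T := lt_trans one_pos hT
      rw [(hd T hT0).deriv]
      exact hderiv_nonpos T hT0
  have heq : ∀ T ∈ Set.Ici (1:ℝ),
      (1 + y / Real.sqrt T) ^ T * Real.exp (-(y * Real.sqrt T)) = Real.exp (g T) := by
    intro T hT
    have hT0 : (0:ℝ) < T := lt_of_lt_of_le one_pos hT
    have hs0 : 0 < Real.sqrt T := Real.sqrt_pos.mpr hT0
    have hb : 0 < 1 + y / Real.sqrt T := by positivity
    rw [Real.rpow_def_of_pos hb, ← Real.exp_add, hg]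
    ring_nf
  intro a ha b hb hab
  simp only
  rw [heq a ha, heq b hb]
  exact Real.exp_le_exp.mpr (key ha hb hab)
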